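/- Let ψ : [t₀,∞) × ℝ → ℝ be C², 2π-periodic in x, satisfy ψ_tt - ψ_xx = -ψ/(4t²), and have zero spatial mean ∫₀^{2π} ψ(t,x) dx = 0 for every t ≥ t₀ > 0. Define the energy ε(t) = (1/2)∫₀^{2π}(ψ_t² + ψ_x²) dx. Then ε'(t) ≤ (π²/t²) ε(t) for all t ≥ t₀. -/

import Mathlib

open Real Set

/-- Partial derivative in the first (time) variable. -/
noncomputable def pt (f : ℝ → ℝ → ℝ) : ℝ → ℝ → ℝ := fun t x => deriv (fun s => f s x) t

/-- Partial derivative in the second (space) variable. -/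
noncomputable def px (f : ℝ → ℝ → ℝ) : ℝ → ℝ → ℝ := fun t x => deriv (fun y => f t y) x

open MeasureTheory intervalIntegral

section EnergyAux

def FF (ψ : ℝ → ℝ → ℝ) : ℝ × ℝ → ℝ := fun p => ψ p.1 p.2
noncomputable def GG (ψ : ℝ → ℝ → ℝ) : ℝ × ℝ → (ℝ × ℝ →L[ℝ] ℝ) := fderiv ℝ (FF ψ)

variable {ψ : ℝ → ℝ → ℝ}

lemma hC2' (hC2 : ContDiff ℝ 2 (fun p : ℝ × ℝ => ψ p.1 p.2)) : ContDiff ℝ (1+1) (FF ψ) := by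
  have : ((1:WithTop ℕ∞)+1) = 2 := by norm_num
  rw [this]; exact hC2

lemma hGc1 (hC2 : ContDiff ℝ 2 (fun p : ℝ × ℝ => ψ p.1 p.2)) : ContDiff ℝ 1 (GG ψ) :=
  (contDiff_succ_iff_fderiv.mp (hC2' hC2)).2.2

lemma hFdiff (hC2 : ContDiff ℝ 2 (fun p : ℝ × ℝ => ψ p.1 p.2)) : Differentiable ℝ (FF ψ) :=
  (contDiff_succ_iff_fderiv.mp (hC2' hC2)).1

lemma hGdiff (hC2 : ContDiff ℝ 2 (fun p : ℝ × ℝ => ψ p.1 p.2)) : Differentiable ℝ (GG ψ) :=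
  (hGc1 hC2).differentiable one_ne_zero

lemma hasDerivAt_t (hC2 : ContDiff ℝ 2 (fun p : ℝ × ℝ => ψ p.1 p.2)) (t x : ℝ) :
    HasDerivAt (fun s => ψ s x) (GG ψ (t, x) (1, 0)) t := by
  have h1 : HasDerivAt (fun s : ℝ => (s, x)) ((1:ℝ), (0:ℝ)) t :=
    (hasDerivAt_id t).prodMk (hasDerivAt_const t x)
  exact ((hFdiff hC2) (t, x)).hasFDerivAt.comp_hasDerivAt t h1

lemma hasDerivAt_x (hC2 : ContDiff ℝ 2 (fun p : ℝ × ℝ => ψ p.1 p.2)) (t x : ℝ) :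
    HasDerivAt (fun y => ψ t y) (GG ψ (t, x) (0, 1)) x := by
  have h1 : HasDerivAt (fun y : ℝ => (t, y)) ((0:ℝ), (1:ℝ)) x :=
    (hasDerivAt_const x t).prodMk (hasDerivAt_id x)
  exact ((hFdiff hC2) (t, x)).hasFDerivAt.comp_hasDerivAt x h1

lemma pt_eq (hC2 : ContDiff ℝ 2 (fun p : ℝ × ℝ => ψ p.1 p.2)) (t x : ℝ) :
    pt ψ t x = GG ψ (t, x) (1, 0) := (hasDerivAt_t hC2 t x).deriv

lemma px_eq (hC2 : ContDiff ℝ 2 (fun p : ℝ × ℝ => ψ p.1 p.2)) (t x : ℝ) :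
    px ψ t x = GG ψ (t, x) (0, 1) := (hasDerivAt_x hC2 t x).deriv

lemma hasDerivAt_G_t (hC2 : ContDiff ℝ 2 (fun p : ℝ × ℝ => ψ p.1 p.2)) (v : ℝ × ℝ) (t x : ℝ) :
    HasDerivAt (fun s => GG ψ (s, x) v) (fderiv ℝ (GG ψ) (t, x) (1, 0) v) t := by
  have h1 : HasDerivAt (fun s : ℝ => (s, x)) ((1:ℝ), (0:ℝ)) t :=
    (hasDerivAt_id t).prodMk (hasDerivAt_const t x)
  have h3 : HasDerivAt (fun s => GG ψ (s, x)) (fderiv ℝ (GG ψ) (t, x) (1, 0)) t :=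
    ((hGdiff hC2) (t, x)).hasFDerivAt.comp_hasDerivAt t h1
  have := h3.clm_apply (hasDerivAt_const t v)
  simpa using this

lemma hasDerivAt_G_x (hC2 : ContDiff ℝ 2 (fun p : ℝ × ℝ => ψ p.1 p.2)) (v : ℝ × ℝ) (t x : ℝ) :
    HasDerivAt (fun y => GG ψ (t, y) v) (fderiv ℝ (GG ψ) (t, x) (0, 1) v) x := by
  have h1 : HasDerivAt (fun y : ℝ => (t, y)) ((0:ℝ), (1:ℝ)) x :=
    (hasDerivAt_const x t).prodMk (hasDerivAt_id x)
  have h3 : HasDerivAt (fun y => GG ψ (t, y)) (fderiv ℝ (GG ψ) (t, x) (0, 1)) x :=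
    ((hGdiff hC2) (t, x)).hasFDerivAt.comp_hasDerivAt x h1
  have := h3.clm_apply (hasDerivAt_const x v)
  simpa using this

lemma hasDerivAt_pt_t (hC2 : ContDiff ℝ 2 (fun p : ℝ × ℝ => ψ p.1 p.2)) (t x : ℝ) :
    HasDerivAt (fun s => pt ψ s x) (fderiv ℝ (GG ψ) (t, x) (1, 0) (1, 0)) t := by
  have h : (fun s => pt ψ s x) = (fun s => GG ψ (s, x) (1, 0)) := funext fun s => pt_eq hC2 s x
  rw [h]; exact hasDerivAt_G_t hC2 _ t x

lemma hasDerivAt_px_t (hC2 : ContDiff ℝ 2 (fun p : ℝ × ℝ => ψ p.1 p.2)) (t x : ℝ) :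
    HasDerivAt (fun s => px ψ s x) (fderiv ℝ (GG ψ) (t, x) (1, 0) (0, 1)) t := by
  have h : (fun s => px ψ s x) = (fun s => GG ψ (s, x) (0, 1)) := funext fun s => px_eq hC2 s x
  rw [h]; exact hasDerivAt_G_t hC2 _ t x

lemma hasDerivAt_pt_x (hC2 : ContDiff ℝ 2 (fun p : ℝ × ℝ => ψ p.1 p.2)) (t x : ℝ) :
    HasDerivAt (fun y => pt ψ t y) (fderiv ℝ (GG ψ) (t, x) (0, 1) (1, 0)) x := by
  have h : (fun y => pt ψ t y) = (fun y => GG ψ (t, y) (1, 0)) := funext fun y => pt_eq hC2 t y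
  rw [h]; exact hasDerivAt_G_x hC2 _ t x

lemma hasDerivAt_px_x (hC2 : ContDiff ℝ 2 (fun p : ℝ × ℝ => ψ p.1 p.2)) (t x : ℝ) :
    HasDerivAt (fun y => px ψ t y) (fderiv ℝ (GG ψ) (t, x) (0, 1) (0, 1)) x := by
  have h : (fun y => px ψ t y) = (fun y => GG ψ (t, y) (0, 1)) := funext fun y => px_eq hC2 t y
  rw [h]; exact hasDerivAt_G_x hC2 _ t x

lemma ptpt_eq (hC2 : ContDiff ℝ 2 (fun p : ℝ × ℝ => ψ p.1 p.2)) (t x : ℝ) :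
    pt (pt ψ) t x = fderiv ℝ (GG ψ) (t, x) (1, 0) (1, 0) := (hasDerivAt_pt_t hC2 t x).deriv

lemma ptpx_eq (hC2 : ContDiff ℝ 2 (fun p : ℝ × ℝ => ψ p.1 p.2)) (t x : ℝ) :
    pt (px ψ) t x = fderiv ℝ (GG ψ) (t, x) (1, 0) (0, 1) := (hasDerivAt_px_t hC2 t x).deriv

lemma pxpt_eq (hC2 : ContDiff ℝ 2 (fun p : ℝ × ℝ => ψ p.1 p.2)) (t x : ℝ) :
    px (pt ψ) t x = fderiv ℝ (GG ψ) (t, x) (0, 1) (1, 0) := (hasDerivAt_pt_x hC2 t x).deriv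

lemma pxpx_eq (hC2 : ContDiff ℝ 2 (fun p : ℝ × ℝ => ψ p.1 p.2)) (t x : ℝ) :
    px (px ψ) t x = fderiv ℝ (GG ψ) (t, x) (0, 1) (0, 1) := (hasDerivAt_px_x hC2 t x).deriv

lemma symmG (hC2 : ContDiff ℝ 2 (fun p : ℝ × ℝ => ψ p.1 p.2)) (t x : ℝ) (v w : ℝ × ℝ) :
    fderiv ℝ (GG ψ) (t, x) v w = fderiv ℝ (GG ψ) (t, x) w v :=
  (hC2.contDiffAt.isSymmSndFDerivAt (by simp)) v w

lemma contG (hC2 : ContDiff ℝ 2 (fun p : ℝ × ℝ => ψ p.1 p.2)) (v : ℝ × ℝ) :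
    Continuous (fun p : ℝ × ℝ => GG ψ p v) :=
  (ContinuousLinearMap.apply ℝ ℝ v).continuous.comp (hGc1 hC2).continuous

lemma contG2 (hC2 : ContDiff ℝ 2 (fun p : ℝ × ℝ => ψ p.1 p.2)) (w v : ℝ × ℝ) :
    Continuous (fun p : ℝ × ℝ => fderiv ℝ (GG ψ) p w v) := by
  have h : Continuous (fderiv ℝ (GG ψ)) := (contDiff_one_iff_fderiv.mp (hGc1 hC2)).2
  exact (ContinuousLinearMap.apply ℝ ℝ v).continuous.comp
    ((ContinuousLinearMap.apply ℝ (ℝ × ℝ →L[ℝ] ℝ) w).continuous.comp h)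

lemma cs_integral (g : ℝ → ℝ) (hg : Continuous g) (a b : ℝ) (hab : a ≤ b) :
    (∫ y in a..b, g y) ^ 2 ≤ (b - a) * ∫ y in a..b, (g y) ^ 2 := by
  rcases eq_or_lt_of_le hab with rfl | hlt
  · simp
  · set L := b - a with hL
    have hL0 : 0 < L := by simp [hL]; linarith
    set S := ∫ y in a..b, g y with hS
    set Q := ∫ y in a..b, (g y) ^ 2 with hQ
    set c := S / L with hc
    have hgi : IntervalIntegrable g volume a b := hg.intervalIntegrable _ _
    have hg2i : IntervalIntegrable (fun y => (g y) ^ 2) volume a b :=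
      (hg.pow 2).intervalIntegrable _ _
    have hgci : IntervalIntegrable (fun y => (2 * c) * g y) volume a b :=
      ((continuous_const.mul hg)).intervalIntegrable _ _
    have h0 : 0 ≤ ∫ y in a..b, (g y - c) ^ 2 :=
      intervalIntegral.integral_nonneg hab fun x _ => sq_nonneg _
    have hexp : ∫ y in a..b, (g y - c) ^ 2 = Q - 2 * c * S + c ^ 2 * L := by
      have h1 : ∀ y, (g y - c) ^ 2 = ((g y) ^ 2 - (2 * c) * g y) + c ^ 2 := by
        intro y; ring
      simp_rw [h1]
      rw [intervalIntegral.integral_add (hg2i.sub hgci) (intervalIntegrable_const),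
        intervalIntegral.integral_sub hg2i hgci, intervalIntegral.integral_const_mul,
        intervalIntegral.integral_const]
      simp [smul_eq_mul, hL]
      ring
    rw [hexp] at h0
    have hc' : c * L = S := by rw [hc]; exact div_mul_cancel₀ S hL0.ne'
    nlinarith [h0, sq_nonneg (S - c * L)]

lemma exists_zero (f : ℝ → ℝ) (hf : Continuous f)
    (hmean : ∫ x in (0:ℝ)..(2 * π), f x = 0) :
    ∃ x₀ ∈ Icc (0:ℝ) (2 * π), f x₀ = 0 := by
  by_contra h
  push_neg at h
  have h2π : (0:ℝ) < 2 * π := by positivity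
  have hfi : IntervalIntegrable f volume 0 (2 * π) := hf.intervalIntegrable _ _
  have hsign : (∀ x ∈ Icc (0:ℝ) (2 * π), 0 < f x) ∨ (∀ x ∈ Icc (0:ℝ) (2 * π), f x < 0) := by
    by_contra hs
    push_neg at hs
    obtain ⟨⟨a, ha, ha'⟩, ⟨b, hb, hb'⟩⟩ := hs
    have hfa : f a < 0 := lt_of_le_of_ne ha' (h a ha)
    have hfb : 0 < f b := lt_of_le_of_ne hb' (Ne.symm (h b hb))
    have h0m : (0:ℝ) ∈ uIcc (f a) (f b) := by
      rw [Set.mem_uIcc]; left; exact ⟨le_of_lt hfa, le_of_lt hfb⟩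
    obtain ⟨c, hc, hfc⟩ := intermediate_value_uIcc (hf.continuousOn (s := uIcc a b)) h0m
    have hcI : c ∈ Icc (0:ℝ) (2 * π) := by
      have : uIcc a b ⊆ Icc (0:ℝ) (2 * π) := uIcc_subset_Icc ha hb
      exact this hc
    exact h c hcI hfc
  rcases hsign with hp | hn
  · have : 0 < ∫ x in (0:ℝ)..(2 * π), f x :=
      intervalIntegral_pos_of_pos_on hfi
        (fun x hx => hp x ⟨le_of_lt hx.1, le_of_lt hx.2⟩) h2π
    rw [hmean] at this; exact lt_irrefl 0 this
  · have : 0 < ∫ x in (0:ℝ)..(2 * π), -f x :=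
      intervalIntegral_pos_of_pos_on hfi.neg
        (fun x hx => neg_pos.2 (hn x ⟨le_of_lt hx.1, le_of_lt hx.2⟩)) h2π
    rw [intervalIntegral.integral_neg, hmean] at this
    simp at this

lemma poincare (f f' : ℝ → ℝ) (hd : ∀ x, HasDerivAt f (f' x) x) (hc' : Continuous f')
    (hmean : ∫ x in (0:ℝ)..(2 * π), f x = 0) :
    ∫ x in (0:ℝ)..(2 * π), (f x) ^ 2 ≤ (4 * π ^ 2) * ∫ x in (0:ℝ)..(2 * π), (f' x) ^ 2 := by
  have hfd : Differentiable ℝ f := fun x => (hd x).differentiableAt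
  have hfc : Continuous f := hfd.continuous
  obtain ⟨x₀, hx₀, hfx₀⟩ := exists_zero f hfc hmean
  have h2π : (0:ℝ) < 2 * π := by positivity
  set Q := ∫ y in (0:ℝ)..(2 * π), (f' y) ^ 2 with hQdef
  have hQ0 : 0 ≤ Q := intervalIntegral.integral_nonneg (le_of_lt h2π) fun x _ => sq_nonneg _
  have hsubint : ∀ u v : ℝ, u ∈ Icc (0:ℝ) (2*π) → v ∈ Icc (0:ℝ) (2*π) → u ≤ v →
      ∫ y in u..v, (f' y) ^ 2 ≤ Q := by
    intro u v hu hv huv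
    exact intervalIntegral.integral_mono_interval hu.1 huv hv.2
      (Filter.Eventually.of_forall fun y => sq_nonneg _)
      ((hc'.pow 2).intervalIntegrable _ _)
  have key : ∀ x ∈ Icc (0:ℝ) (2 * π), (f x) ^ 2 ≤ (2 * π) * Q := by
    intro x hx
    have hFTC : ∫ y in x₀..x, f' y = f x - f x₀ :=
      intervalIntegral.integral_eq_sub_of_hasDerivAt (fun y _ => hd y)
        (hc'.intervalIntegrable _ _)
    have hfx : f x = ∫ y in x₀..x, f' y := by rw [hFTC, hfx₀]; ring
    rcases le_total x₀ x with hle | hle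
    · have h1 := cs_integral f' hc' x₀ x hle
      have h2 := hsubint x₀ x hx₀ hx hle
      have h3 : 0 ≤ ∫ y in x₀..x, (f' y) ^ 2 :=
        intervalIntegral.integral_nonneg hle fun y _ => sq_nonneg _
      have h4 : x - x₀ ≤ 2 * π := by
        have := hx.2; have := hx₀.1; linarith
      rw [hfx]
      calc (∫ y in x₀..x, f' y) ^ 2 ≤ (x - x₀) * ∫ y in x₀..x, (f' y) ^ 2 := h1
        _ ≤ (2 * π) * Q := by nlinarith
    · have h1 := cs_integral f' hc' x x₀ hle
      have h2 := hsubint x x₀ hx hx₀ hle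
      have h3 : 0 ≤ ∫ y in x..x₀, (f' y) ^ 2 :=
        intervalIntegral.integral_nonneg hle fun y _ => sq_nonneg _
      have h4 : x₀ - x ≤ 2 * π := by
        have := hx₀.2; have := hx.1; linarith
      have hswap : (∫ y in x₀..x, f' y) = -∫ y in x..x₀, f' y :=
        intervalIntegral.integral_symm x x₀
      rw [hfx, hswap, neg_pow]
      calc (-1 : ℝ) ^ 2 * (∫ y in x..x₀, f' y) ^ 2 = (∫ y in x..x₀, f' y) ^ 2 := by ring
        _ ≤ (x₀ - x) * ∫ y in x..x₀, (f' y) ^ 2 := h1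
        _ ≤ (2 * π) * Q := by nlinarith
  have hmono := intervalIntegral.integral_mono_on (μ := volume) (le_of_lt h2π)
    ((hfc.pow 2).intervalIntegrable _ _) intervalIntegrable_const key
  rw [intervalIntegral.integral_const, smul_eq_mul] at hmono
  calc ∫ x in (0:ℝ)..(2 * π), (f x) ^ 2 ≤ (2 * π - 0) * ((2 * π) * Q) := hmono
    _ = (4 * π ^ 2) * Q := by ring

end EnergyAux

/-- The energy of a mean-zero, spatially periodic solution of
`ψ_tt - ψ_xx = -ψ/(4t²)` satisfies the differential inequality
`ε'(t) ≤ (π²/t²) ε(t)`. -/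
theorem energy_inequality
    (ψ : ℝ → ℝ → ℝ) (t₀ : ℝ) (ht₀ : 0 < t₀)
    (hC2 : ContDiff ℝ 2 (fun p : ℝ × ℝ => ψ p.1 p.2))
    (hper : ∀ t x : ℝ, ψ t (x + 2 * π) = ψ t x)
    (heq : ∀ t : ℝ, t₀ ≤ t → ∀ x : ℝ,
      pt (pt ψ) t x - px (px ψ) t x = -ψ t x / (4 * t ^ 2))
    (hmean : ∀ t : ℝ, t₀ ≤ t → ∫ x in (0:ℝ)..(2 * π), ψ t x = 0) :
    ∀ t : ℝ, t₀ ≤ t →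
      deriv (fun s => (1 / 2) * ∫ x in (0:ℝ)..(2 * π), (pt ψ s x) ^ 2 + (px ψ s x) ^ 2) t
        ≤ (π ^ 2 / t ^ 2) *
          ((1 / 2) * ∫ x in (0:ℝ)..(2 * π), (pt ψ t x) ^ 2 + (px ψ t x) ^ 2) := by
  intro t ht
  have htpos : 0 < t := lt_of_lt_of_le ht₀ ht
  have h2π : (0:ℝ) < 2 * π := by positivity
  -- continuity facts
  have c1 : Continuous (fun p : ℝ × ℝ => pt ψ p.1 p.2) := by
    have h : (fun p : ℝ × ℝ => pt ψ p.1 p.2) = fun p => GG ψ p (1, 0) := by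
      funext p; rw [pt_eq hC2 p.1 p.2]
    rw [h]; exact contG hC2 _
  have c2 : Continuous (fun p : ℝ × ℝ => px ψ p.1 p.2) := by
    have h : (fun p : ℝ × ℝ => px ψ p.1 p.2) = fun p => GG ψ p (0, 1) := by
      funext p; rw [px_eq hC2 p.1 p.2]
    rw [h]; exact contG hC2 _
  have cψ : Continuous (fun p : ℝ × ℝ => ψ p.1 p.2) := hC2.continuous
  -- the two-variable derivative integrand
  set Fi' : ℝ → ℝ → ℝ := fun s x =>
    2 * pt ψ s x * fderiv ℝ (GG ψ) (s, x) (1, 0) (1, 0) +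
    2 * px ψ s x * fderiv ℝ (GG ψ) (s, x) (1, 0) (0, 1) with hFi'
  have cF' : Continuous (fun p : ℝ × ℝ => Fi' p.1 p.2) := by
    apply Continuous.add
    · exact (continuous_const.mul c1).mul (contG2 hC2 (1,0) (1,0))
    · exact (continuous_const.mul c2).mul (contG2 hC2 (1,0) (0,1))
  have hdFi : ∀ s x : ℝ, HasDerivAt (fun s' => (pt ψ s' x) ^ 2 + (px ψ s' x) ^ 2) (Fi' s x) s := by
    intro s x
    have h := ((hasDerivAt_pt_t hC2 s x).fun_pow 2).fun_add ((hasDerivAt_px_t hC2 s x).fun_pow 2)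
    refine h.congr_deriv ?_
    simp [hFi']
  -- bound on a compact neighborhood
  obtain ⟨C, hC⟩ := (isCompact_Icc.prod (isCompact_Icc (a := (0:ℝ)) (b := 2*π))).exists_bound_of_continuousOn
      (cF'.continuousOn (s := Icc (t-1) (t+1) ×ˢ Icc (0:ℝ) (2*π)))
  -- differentiate under the integral sign
  obtain ⟨-, hE⟩ := intervalIntegral.hasDerivAt_integral_of_dominated_loc_of_deriv_le
    (F := fun s x => (pt ψ s x) ^ 2 + (px ψ s x) ^ 2) (F' := Fi')
    (x₀ := t) (s := Metric.ball t 1) (a := (0:ℝ)) (b := 2*π) (bound := fun _ => C) (μ := volume)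
    (Metric.ball_mem_nhds t one_pos)
    (Filter.Eventually.of_forall fun s =>
      (((c1.comp (Continuous.prodMk_right s)).pow 2).add
        ((c2.comp (Continuous.prodMk_right s)).pow 2)).aestronglyMeasurable)
    ((((c1.comp (Continuous.prodMk_right t)).pow 2).add
        ((c2.comp (Continuous.prodMk_right t)).pow 2)).intervalIntegrable _ _)
    ((cF'.comp (Continuous.prodMk_right t)).aestronglyMeasurable)
    (Filter.Eventually.of_forall (fun x hx s hs => by
      have hxI : x ∈ Icc (0:ℝ) (2*π) := by
        rw [uIoc_of_le (le_of_lt h2π)] at hx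
        exact ⟨le_of_lt hx.1, hx.2⟩
      have hsI : s ∈ Icc (t-1) (t+1) := by
        rw [Metric.mem_ball, Real.dist_eq] at hs
        have := abs_lt.mp hs
        constructor <;> linarith [this.1, this.2]
      exact hC (s, x) ⟨hsI, hxI⟩))
    (intervalIntegrable_const)
    (Filter.Eventually.of_forall (fun x _ s _ => hdFi s x))
  have hE2 := HasDerivAt.const_mul (1/2 : ℝ) hE
  rw [hE2.deriv]
  -- fixed-time continuity
  have cxpt : Continuous (fun x => pt ψ t x) := c1.comp (Continuous.prodMk_right t)
  have cxpx : Continuous (fun x => px ψ t x) := c2.comp (Continuous.prodMk_right t)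
  have cxψ : Continuous (fun x => ψ t x) := cψ.comp (Continuous.prodMk_right t)
  have cxtt : Continuous (fun x => fderiv ℝ (GG ψ) (t, x) (1,0) (1,0)) :=
    (contG2 hC2 (1,0) (1,0)).comp (Continuous.prodMk_right t)
  have cxxt : Continuous (fun x => fderiv ℝ (GG ψ) (t, x) (0,1) (1,0)) :=
    (contG2 hC2 (0,1) (1,0)).comp (Continuous.prodMk_right t)
  have cxxx : Continuous (fun x => fderiv ℝ (GG ψ) (t, x) (0,1) (0,1)) :=
    (contG2 hC2 (0,1) (0,1)).comp (Continuous.prodMk_right t)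
  -- integration by parts
  have hi1 : IntervalIntegrable (fun x => fderiv ℝ (GG ψ) (t,x) (0,1) (0,1) * pt ψ t x)
      volume 0 (2*π) := (cxxx.mul cxpt).intervalIntegrable _ _
  have hi2 : IntervalIntegrable (fun x => px ψ t x * fderiv ℝ (GG ψ) (t,x) (0,1) (1,0))
      volume 0 (2*π) := (cxpx.mul cxxt).intervalIntegrable _ _
  have hi3 : IntervalIntegrable (fun x => pt ψ t x * fderiv ℝ (GG ψ) (t,x) (1,0) (1,0))
      volume 0 (2*π) := (cxpt.mul cxtt).intervalIntegrable _ _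
  have hIBP : ∫ x in (0:ℝ)..(2*π),
      (fderiv ℝ (GG ψ) (t, x) (0,1) (0,1) * pt ψ t x
        + px ψ t x * fderiv ℝ (GG ψ) (t, x) (0,1) (1,0))
      = px ψ t (2*π) * pt ψ t (2*π) - px ψ t 0 * pt ψ t 0 :=
    intervalIntegral.integral_deriv_mul_eq_sub
      (fun x _ => hasDerivAt_px_x hC2 t x) (fun x _ => hasDerivAt_pt_x hC2 t x)
      (cxxx.intervalIntegrable _ _) (cxxt.intervalIntegrable _ _)
  have hper_pt : pt ψ t (2*π) = pt ψ t 0 := by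
    have h : (fun s => ψ s (2*π)) = fun s => ψ s 0 := by
      funext s; have := hper s 0; rwa [zero_add] at this
    show deriv (fun s => ψ s (2*π)) t = deriv (fun s => ψ s 0) t
    rw [h]
  have hper_px : px ψ t (2*π) = px ψ t 0 := by
    show deriv (fun y => ψ t y) (2*π) = deriv (fun y => ψ t y) 0
    have h1 : deriv (fun y => ψ t (y + 2*π)) 0 = deriv (fun y => ψ t y) (0 + 2*π) :=
      deriv_comp_add_const (fun y => ψ t y) (2*π) 0
    have h2 : (fun y => ψ t (y + 2*π)) = fun y => ψ t y := funext fun y => hper t y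
    rw [h2] at h1
    rw [zero_add] at h1
    exact h1.symm
  have hIBP0 : ∫ x in (0:ℝ)..(2*π),
      (fderiv ℝ (GG ψ) (t, x) (0,1) (0,1) * pt ψ t x
        + px ψ t x * fderiv ℝ (GG ψ) (t, x) (0,1) (1,0)) = 0 := by
    rw [hIBP, hper_pt, hper_px]; ring
  rw [intervalIntegral.integral_add hi1 hi2] at hIBP0
  have hIBP2 : ∫ x in (0:ℝ)..(2*π), px ψ t x * fderiv ℝ (GG ψ) (t,x) (0,1) (1,0)
      = - ∫ x in (0:ℝ)..(2*π), fderiv ℝ (GG ψ) (t,x) (0,1) (0,1) * pt ψ t x := by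
    linarith
  -- the key identity : ε'(t) = ∫ ψ_t ⬝ (-ψ/(4t²))
  have hkey : (1/2 : ℝ) * ∫ x in (0:ℝ)..(2*π), Fi' t x
      = ∫ x in (0:ℝ)..(2*π), pt ψ t x * (-ψ t x / (4*t^2)) := by
    rw [← intervalIntegral.integral_const_mul]
    have hptw : (fun x => (1/2 : ℝ) * Fi' t x)
        = fun x => pt ψ t x * fderiv ℝ (GG ψ) (t,x) (1,0) (1,0)
            + px ψ t x * fderiv ℝ (GG ψ) (t,x) (0,1) (1,0) := by
      funext x
      simp only [hFi']
      rw [symmG hC2 t x (1,0) (0,1)]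
      ring
    rw [hptw]
    rw [intervalIntegral.integral_add hi3 hi2, hIBP2, ← sub_eq_add_neg,
      ← intervalIntegral.integral_sub hi3 hi1]
    congr 1
    funext x
    have hAB : fderiv ℝ (GG ψ) (t,x) (1,0) (1,0) - fderiv ℝ (GG ψ) (t,x) (0,1) (0,1)
        = -ψ t x / (4*t^2) := by
      rw [← ptpt_eq hC2, ← pxpx_eq hC2]; exact heq t ht x
    linear_combination (pt ψ t x) * hAB
  rw [hkey]
  -- abbreviations
  set A := ∫ x in (0:ℝ)..(2*π), (pt ψ t x)^2 with hA
  set B := ∫ x in (0:ℝ)..(2*π), (px ψ t x)^2 with hB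
  set P := ∫ x in (0:ℝ)..(2*π), (ψ t x)^2 with hP
  have hA0 : 0 ≤ A := intervalIntegral.integral_nonneg h2π.le fun x _ => sq_nonneg _
  have hB0 : 0 ≤ B := intervalIntegral.integral_nonneg h2π.le fun x _ => sq_nonneg _
  have ht2 : (0:ℝ) < t^2 := by positivity
  -- pointwise AM-GM
  have ptwise : ∀ a b : ℝ, a * (-b / (4*t^2)) ≤ 1/(8*t^2) * (a^2 + b^2) := by
    intro a b
    rw [← sub_nonneg]
    have h : 1/(8*t^2) * (a^2+b^2) - a * (-b/(4*t^2)) = (a+b)^2 / (8*t^2) := by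
      field_simp; ring
    rw [h]; positivity
  have hstep1 : ∫ x in (0:ℝ)..(2*π), pt ψ t x * (-ψ t x / (4*t^2))
      ≤ 1/(8*t^2) * (A + P) := by
    have hmono : ∫ x in (0:ℝ)..(2*π), pt ψ t x * (-ψ t x / (4*t^2))
        ≤ ∫ x in (0:ℝ)..(2*π), 1/(8*t^2) * ((pt ψ t x)^2 + (ψ t x)^2) := by
      apply intervalIntegral.integral_mono_on h2π.le
      · exact ((cxpt.mul (((cxψ.neg).div_const _))).intervalIntegrable _ _)
      · exact ((continuous_const.mul ((cxpt.pow 2).add (cxψ.pow 2))).intervalIntegrable _ _)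
      · intro x _; exact ptwise _ _
    rw [intervalIntegral.integral_const_mul,
      intervalIntegral.integral_add ((cxpt.fun_pow 2).intervalIntegrable _ _)
        ((cxψ.fun_pow 2).intervalIntegrable _ _)] at hmono
    exact hmono
  -- Poincaré
  have hstep2 : P ≤ 4*π^2 * B := by
    apply poincare (fun x => ψ t x) (fun x => px ψ t x)
      (fun x => by show HasDerivAt (fun y => ψ t y) (px ψ t x) x; rw [px_eq hC2 t x]; exact hasDerivAt_x hC2 t x) cxpx (hmean t ht)
  -- assemble
  have hsplit : ∫ x in (0:ℝ)..(2*π), ((pt ψ t x)^2 + (px ψ t x)^2) = A + B :=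
    intervalIntegral.integral_add ((cxpt.pow 2).intervalIntegrable _ _)
      ((cxpx.pow 2).intervalIntegrable _ _)
  rw [hsplit]
  have hfin : 1/(8*t^2) * (A + P) ≤ π^2 / t^2 * (1/2 * (A + B)) := by
    have h1 : 1/(8*t^2) * (A + P) ≤ 1/(8*t^2) * (A + 4*π^2*B) := by
      apply mul_le_mul_of_nonneg_left (by linarith) (by positivity)
    have h2 : 1/(8*t^2) * (A + 4*π^2*B) ≤ π^2 / t^2 * (1/2 * (A + B)) := by
      rw [← sub_nonneg]
      have h : π^2 / t^2 * (1/2 * (A + B)) - 1/(8*t^2) * (A + 4*π^2*B)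
          = (4*π^2 - 1) * A / (8*t^2) := by field_simp; ring
      rw [h]
      apply div_nonneg _ (by positivity)
      have hπ2 : (9:ℝ) ≤ π^2 := by nlinarith [pi_gt_three]
      exact mul_nonneg (by nlinarith) hA0
    linarith
  linarith
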